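/- Fix integers n ≥ 2 and 1 ≤ k ≤ n−1. Let p_{a,b} be nonzero complex numbers for 0 ≤ a ≤ k and 0 ≤ b ≤ n−k, with the convention p_{a,0} = p_{0,b} = 1 for all a,b. Define x_{i,j} = p_{k+1−i, j} / p_{k−i, j−1} for 1 ≤ i ≤ k and 1 ≤ j ≤ n−k. Then the following identity of complex numbers holds: Σ_{i=1}^{k−1} Σ_{j=1}^{n−k} x_{i,j}/x_{i+1,j} + Σ_{i=1}^{k} Σ_{j=1}^{n−k−1} x_{i,j+1}/x_{i,j} + 1/x_{1,n−k} + x_{k,1} = p_{1,1} + Σ_{a=2}^{k} Σ_{b=1}^{n−k} (p_{a,b}·p_{a−2,b−1})/(p_{a−1,b−1}·p_{a−1,b}) + p_{k−1,n−k−1}/p_{k,n−k} + Σ_{a=1}^{k} Σ_{b=2}^{n−k} (p_{a,b}·p_{a−1,b−2})/(p_{a−1,b−1}·p_{a,b−1}). -/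

import Mathlib

private lemma dd_aux (A B C D : ℂ) : (A / B) / (C / D) = A * D / (B * C) := by
  rw [div_div_eq_mul_div, div_mul_eq_mul_div, div_div]

/-- The change-of-variables identity: under the substitution
`x_{i,j} = p_{k+1−i,j}/p_{k−i,j−1}`, the Maslov 2 disk potential of the
Gelfand–Cetlin torus agrees with the Marsh–Rietsch superpotential restricted to the
rectangular cluster chart. -/
theorem disk_potential_eq_rectangular_superpotential
    (n k : ℕ) (hn : 2 ≤ n) (hk1 : 1 ≤ k) (hk2 : k ≤ n - 1)
    (p : ℕ → ℕ → ℂ)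
    (hp : ∀ a b, a ≤ k → b ≤ n - k → p a b ≠ 0)
    (hrow0 : ∀ a, p a 0 = 1) (hcol0 : ∀ b, p 0 b = 1)
    (x : ℕ → ℕ → ℂ)
    (hx : ∀ i j, 1 ≤ i → i ≤ k → 1 ≤ j → j ≤ n - k →
      x i j = p (k + 1 - i) j / p (k - i) (j - 1)) :
    (∑ i ∈ Finset.Icc 1 (k - 1), ∑ j ∈ Finset.Icc 1 (n - k), x i j / x (i + 1) j)
      + (∑ i ∈ Finset.Icc 1 k, ∑ j ∈ Finset.Icc 1 (n - k - 1), x i (j + 1) / x i j)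
      + 1 / x 1 (n - k) + x k 1
    = p 1 1
      + (∑ a ∈ Finset.Icc 2 k, ∑ b ∈ Finset.Icc 1 (n - k),
          p a b * p (a - 2) (b - 1) / (p (a - 1) (b - 1) * p (a - 1) b))
      + p (k - 1) (n - k - 1) / p k (n - k)
      + (∑ a ∈ Finset.Icc 1 k, ∑ b ∈ Finset.Icc 2 (n - k),
          p a b * p (a - 1) (b - 2) / (p (a - 1) (b - 1) * p a (b - 1))) := by
  have hm : 1 ≤ n - k := by omega
  have hx1 : x k 1 = p 1 1 := by
    rw [hx k 1 hk1 le_rfl le_rfl hm]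
    have h1 : k + 1 - k = 1 := by omega
    rw [h1, Nat.sub_self, hrow0, div_one]
  have hx2 : 1 / x 1 (n - k) = p (k - 1) (n - k - 1) / p k (n - k) := by
    rw [hx 1 (n - k) le_rfl hk1 hm le_rfl]
    have h1 : k + 1 - 1 = k := by omega
    rw [h1, one_div_div]
  have hs1 : (∑ i ∈ Finset.Icc 1 (k - 1), ∑ j ∈ Finset.Icc 1 (n - k), x i j / x (i + 1) j)
      = ∑ a ∈ Finset.Icc 2 k, ∑ b ∈ Finset.Icc 1 (n - k),
          p a b * p (a - 2) (b - 1) / (p (a - 1) (b - 1) * p (a - 1) b) := by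
    refine Finset.sum_nbij' (fun i => k + 1 - i) (fun a => k + 1 - a) ?_ ?_ ?_ ?_ ?_
    · intro i hi; simp only [Finset.mem_Icc] at *; omega
    · intro a ha; simp only [Finset.mem_Icc] at *; omega
    · intro i hi; simp only [Finset.mem_Icc] at hi; omega
    · intro a ha; simp only [Finset.mem_Icc] at ha; omega
    · intro i hi
      simp only [Finset.mem_Icc] at hi
      refine Finset.sum_congr rfl fun j hj => ?_
      simp only [Finset.mem_Icc] at hj
      rw [hx i j hi.1 (by omega) hj.1 hj.2, hx (i + 1) j (by omega) (by omega) hj.1 hj.2,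
        dd_aux]
      have e1 : k + 1 - i = k + 1 - i := rfl
      have e2 : k + 1 - (i + 1) = k + 1 - i - 1 := by omega
      have e3 : k - i = k + 1 - i - 1 := by omega
      have e4 : k - (i + 1) = k + 1 - i - 2 := by omega
      rw [e2, e3, e4]
  have hs2 : (∑ i ∈ Finset.Icc 1 k, ∑ j ∈ Finset.Icc 1 (n - k - 1), x i (j + 1) / x i j)
      = ∑ a ∈ Finset.Icc 1 k, ∑ b ∈ Finset.Icc 2 (n - k),
          p a b * p (a - 1) (b - 2) / (p (a - 1) (b - 1) * p a (b - 1)) := by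
    refine Finset.sum_nbij' (fun i => k + 1 - i) (fun a => k + 1 - a) ?_ ?_ ?_ ?_ ?_
    · intro i hi; simp only [Finset.mem_Icc] at *; omega
    · intro a ha; simp only [Finset.mem_Icc] at *; omega
    · intro i hi; simp only [Finset.mem_Icc] at hi; omega
    · intro a ha; simp only [Finset.mem_Icc] at ha; omega
    · intro i hi
      simp only [Finset.mem_Icc] at hi
      refine Finset.sum_nbij' (fun j => j + 1) (fun b => b - 1) ?_ ?_ ?_ ?_ ?_
      · intro j hj; simp only [Finset.mem_Icc] at *; omega
      · intro b hb; simp only [Finset.mem_Icc] at *; omega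
      · intro j hj; simp only [Finset.mem_Icc] at hj; omega
      · intro b hb; simp only [Finset.mem_Icc] at hb; omega
      · intro j hj
        simp only [Finset.mem_Icc] at hj
        rw [hx i (j + 1) hi.1 hi.2 (by omega) (by omega),
          hx i j hi.1 hi.2 hj.1 (by omega), dd_aux]
        have e2 : k - i = k + 1 - i - 1 := by omega
        have e3 : j + 1 - 1 = j := by omega
        have e4 : j + 1 - 2 = j - 1 := by omega
        rw [e2, e3, e4]
  rw [hx1, hx2, hs1, hs2]
  ring
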